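/- (Truncation estimate via entropy) Let g ≥ 0 on a measure space with weight w ≥ 1, and suppose ∫ g·w^{k+ζ+1} dμ = M < ∞ and ∫ g·|log(g̃)| dμ + (ℓ/2)∫ g·w² dμ = H < ∞ where g̃ is measurable with g̃ > 0 and g·1_{g̃ w^ℓ ≥ K} ≤ g for some ℓ > 0, K > 1. Setting s = k+ζ+1, one has ∫ g·w^{k+ζ}·1_{g̃ w^ℓ ≥ K} dμ ≤ (log K)^{−1/s} · M^{(s−1)/s} · H^{1/s}, using that on the set {g̃ w^ℓ ≥ K}, 1 ≤ (log(g̃ w^ℓ)/log K)^{1/s} and |log(g̃ w^ℓ)| ≤ |log g̃| + (ℓ/2)w². -/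

import Mathlib

open MeasureTheory
open scoped Classical ENNReal

theorem truncation_entropy_estimate
    {X : Type*} [MeasurableSpace X] (μ : Measure X)
    (g gt w : X → ℝ) (hg0 : ∀ x, 0 ≤ g x) (hgt : ∀ x, 0 < gt x)
    (hw : ∀ x, 1 ≤ w x)
    (k ζ ℓ K : ℝ) (hk : 0 ≤ k) (hζ : 0 < ζ) (hℓ : 0 < ℓ) (hK : 1 < K)
    (s : ℝ) (hs : s = k + ζ + 1)
    (M H : ℝ)
    (hM : M = ∫ x, g x * w x ^ (k + ζ + 1) ∂μ)
    (hH : H = ∫ x, g x * (|Real.log (gt x)| + ℓ / 2 * w x ^ 2) ∂μ)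
    (hMint : Integrable (fun x => g x * w x ^ (k + ζ + 1)) μ)
    (hHint : Integrable (fun x => g x * (|Real.log (gt x)| + ℓ / 2 * w x ^ 2)) μ)
    (hTint : Integrable
      (fun x => if K ≤ gt x * w x ^ ℓ then g x * w x ^ (k + ζ) else 0) μ) :
    (∫ x, (if K ≤ gt x * w x ^ ℓ then g x * w x ^ (k + ζ) else 0) ∂μ)
      ≤ (Real.log K) ^ (-(1 / s)) * M ^ ((s - 1) / s) * H ^ (1 / s) := by
  have hs1 : 1 < s := by rw [hs]; linarith
  have hs0 : (0:ℝ) < s := lt_trans one_pos hs1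
  have hsm1 : (0:ℝ) < s - 1 := by linarith
  have hlogK : 0 < Real.log K := Real.log_pos hK
  set A : X → ℝ := fun x => |Real.log (gt x)| + ℓ / 2 * w x ^ 2 with hA
  have hA0 : ∀ x, 0 ≤ A x := fun x => add_nonneg (abs_nonneg _) (by positivity)
  have hw0 : ∀ x, (0:ℝ) < w x := fun x => lt_of_lt_of_le one_pos (hw x)
  have hkz : k + ζ = s - 1 := by rw [hs]; ring
  have hks : k + ζ + 1 = s := by rw [hs]
  rw [hks] at hM hMint
  set F : X → ℝ := fun x => (g x * w x ^ s) ^ ((s-1)/s) with hF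
  set G : X → ℝ := fun x => (g x * A x / Real.log K) ^ (1/s) with hG
  have hbase : ∀ x, 0 ≤ g x * w x ^ s :=
    fun x => mul_nonneg (hg0 x) (Real.rpow_nonneg (hw0 x).le s)
  have hbase2 : ∀ x, 0 ≤ g x * A x / Real.log K :=
    fun x => div_nonneg (mul_nonneg (hg0 x) (hA0 x)) hlogK.le
  have hF0 : ∀ x, 0 ≤ F x := fun x => Real.rpow_nonneg (hbase x) _
  have hG0 : ∀ x, 0 ≤ G x := fun x => Real.rpow_nonneg (hbase2 x) _
  have hH0 : 0 ≤ H := hH ▸ integral_nonneg fun x => mul_nonneg (hg0 x) (hA0 x)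
  -- Memℒp facts
  have hFmem : MemLp F (ENNReal.ofReal (s/(s-1))) μ := by
    have h := (memLp_one_iff_integrable.2 hMint).norm_rpow_div (ENNReal.ofReal ((s-1)/s))
    rw [ENNReal.toReal_ofReal (by positivity)] at h
    have hexp : (1 : ℝ≥0∞) / ENNReal.ofReal ((s-1)/s) = ENNReal.ofReal (s/(s-1)) := by
      rw [one_div, ← ENNReal.ofReal_inv_of_pos (by positivity), inv_div]
    rw [hexp] at h
    refine (memLp_congr_ae ?_).1 h
    filter_upwards with x
    rw [Real.norm_of_nonneg (hbase x)]
  have hHint' : Integrable (fun x => g x * A x / Real.log K) μ := hHint.div_const _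
  have hGmem : MemLp G (ENNReal.ofReal s) μ := by
    have h := (memLp_one_iff_integrable.2 hHint').norm_rpow_div (ENNReal.ofReal (1/s))
    rw [ENNReal.toReal_ofReal (by positivity)] at h
    have hexp : (1 : ℝ≥0∞) / ENNReal.ofReal (1/s) = ENNReal.ofReal s := by
      rw [one_div, ← ENNReal.ofReal_inv_of_pos (by positivity), one_div, inv_inv]
    rw [hexp] at h
    refine (memLp_congr_ae ?_).1 h
    filter_upwards with x
    rw [Real.norm_of_nonneg (hbase2 x)]
  have hpq : (s/(s-1)).HolderConjugate s := by
    rw [Real.holderConjugate_iff]; constructor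
    · rw [lt_div_iff₀ hsm1]; linarith
    · rw [inv_div]; field_simp; ring
  -- integrability of the product
  have hpqr : (1:ℝ≥0∞)/1 = 1 / ENNReal.ofReal s + 1 / ENNReal.ofReal (s/(s-1)) := by
    have h1 : (1:ℝ≥0∞) / ENNReal.ofReal s = ENNReal.ofReal (1/s) := by
      rw [one_div, ← ENNReal.ofReal_inv_of_pos hs0, one_div]
    have h2 : (1:ℝ≥0∞) / ENNReal.ofReal (s/(s-1)) = ENNReal.ofReal ((s-1)/s) := by
      rw [one_div, ← ENNReal.ofReal_inv_of_pos (by positivity), inv_div]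
    rw [h1, h2, ← ENNReal.ofReal_add (by positivity) (by positivity),
      show 1/s + (s-1)/s = 1 from by field_simp; ring]
    simp
  have hFGint : Integrable (fun x => F x * G x) μ := by
    have hsm := hFmem.smul hGmem (hpqr := ⟨by simpa only [one_div] using hpqr.symm⟩)
    have := memLp_one_iff_integrable.1 hsm
    have heq : (G • F) = fun x => F x * G x := by
      funext x; simp [Pi.smul_apply, smul_eq_mul, mul_comm]
    rwa [heq] at this
  -- pointwise bound
  have hpt : ∀ x, (if K ≤ gt x * w x ^ ℓ then g x * w x ^ (k+ζ) else 0) ≤ F x * G x := by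
    intro x
    by_cases hx : K ≤ gt x * w x ^ ℓ
    · rw [if_pos hx]
      have hwx := hw x
      have hw0x := hw0 x
      have hlogw : Real.log (w x) ≤ w x - 1 := Real.log_le_sub_one_of_pos hw0x
      have hAx : Real.log K ≤ A x := by
        have h1 : Real.log K ≤ Real.log (gt x * w x ^ ℓ) :=
          Real.log_le_log (by linarith : (0:ℝ) < K) hx
        rw [Real.log_mul (hgt x).ne' (by positivity), Real.log_rpow hw0x] at h1
        have h2 : Real.log (gt x) ≤ |Real.log (gt x)| := le_abs_self _
        have h3 : ℓ * Real.log (w x) ≤ ℓ/2 * w x ^ 2 := by nlinarith [sq_nonneg (w x - 1)]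
        simp only [hA]
        linarith
      have h1le : (1:ℝ) ≤ (A x / Real.log K) ^ (1/s) := by
        have hone : (1:ℝ) ≤ A x / Real.log K := (one_le_div hlogK).2 hAx
        calc (1:ℝ) = 1 ^ (1/s) := (Real.one_rpow _).symm
          _ ≤ (A x / Real.log K) ^ (1/s) :=
            Real.rpow_le_rpow zero_le_one hone (by positivity)
      have hFG : F x * G x = g x * w x ^ (s-1) * (A x / Real.log K) ^ (1/s) := by
        simp only [hF, hG]
        rw [Real.mul_rpow (hg0 x) (Real.rpow_nonneg hw0x.le s),
            mul_div_assoc, Real.mul_rpow (hg0 x) (div_nonneg (hA0 x) hlogK.le),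
            ← Real.rpow_mul hw0x.le,
            show s * ((s-1)/s) = s - 1 from by field_simp]
        have hgsplit : g x ^ ((s-1)/s) * g x ^ (1/s) = g x := by
          rw [← Real.rpow_add' (hg0 x) (by rw [show (s-1)/s + 1/s = 1 from by field_simp; ring]; norm_num),
            show (s-1)/s + 1/s = 1 from by field_simp; ring, Real.rpow_one]
        calc g x ^ ((s-1)/s) * w x ^ (s-1) * (g x ^ (1/s) * (A x / Real.log K) ^ (1/s))
            = (g x ^ ((s-1)/s) * g x ^ (1/s)) * w x ^ (s-1) * (A x / Real.log K) ^ (1/s) := by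
              ring
          _ = g x * w x ^ (s-1) * (A x / Real.log K) ^ (1/s) := by rw [hgsplit]
      rw [hFG, hkz]
      exact le_mul_of_one_le_right (mul_nonneg (hg0 x) (Real.rpow_nonneg hw0x.le _)) h1le
    · rw [if_neg hx]; exact mul_nonneg (hF0 x) (hG0 x)
  -- compute the two integrals
  have hIF : ∫ x, F x ^ (s/(s-1)) ∂μ = M := by
    rw [hM]
    refine integral_congr_ae (Filter.Eventually.of_forall fun x => ?_)
    simp only [hF]
    rw [← Real.rpow_mul (hbase x), show (s-1)/s * (s/(s-1)) = 1 from by field_simp,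
      Real.rpow_one]
  have hIG : ∫ x, G x ^ s ∂μ = H / Real.log K := by
    have h1 : ∫ x, G x ^ s ∂μ = ∫ x, g x * A x / Real.log K ∂μ := by
      refine integral_congr_ae (Filter.Eventually.of_forall fun x => ?_)
      simp only [hG]
      rw [← Real.rpow_mul (hbase2 x), one_div_mul_cancel hs0.ne', Real.rpow_one]
    rw [h1, integral_div, ← hH]
  have holder := MeasureTheory.integral_mul_le_Lp_mul_Lq_of_nonneg hpq
      (Filter.Eventually.of_forall hF0) (Filter.Eventually.of_forall hG0) hFmem hGmem
  calc (∫ x, (if K ≤ gt x * w x ^ ℓ then g x * w x ^ (k + ζ) else 0) ∂μ)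
      ≤ ∫ x, F x * G x ∂μ := integral_mono hTint hFGint hpt
    _ ≤ (∫ x, F x ^ (s/(s-1)) ∂μ) ^ (1/(s/(s-1))) * (∫ x, G x ^ s ∂μ) ^ (1/s) := holder
    _ = M ^ ((s-1)/s) * (H / Real.log K) ^ (1/s) := by rw [hIF, hIG, one_div_div]
    _ = (Real.log K) ^ (-(1 / s)) * M ^ ((s - 1) / s) * H ^ (1 / s) := by
        rw [Real.div_rpow hH0 hlogK.le, Real.rpow_neg hlogK.le]
        ring
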